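/- arXiv:2503.05364 — 2 statements merged into one kernel-verified Lean document; each statement's English description precedes it below -/
import Mathlib

section
/- Peirce's Law ((φ→ψ)→φ)→φ is derivable in NK± for any formulas φ, ψ. -/
/-- Literals: assertions `pos c` and denials `neg c` of contents `c`. -/
inductive Lit (C : Type) : Type
  | pos : C → Lit C
  | neg : C → Lit C

/-- Dual literal: swaps assertion and denial. -/
def Lit.dual {C : Type} : Lit C → Lit C
  | .pos c => .neg c
  | .neg c => .pos c

/-- Formulas over literals. -/
inductive Form (C : Type) : Type
  | lit : Lit C → Form C
  | bot : Form C
  | top : Form C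
  | and : Form C → Form C → Form C
  | or  : Form C → Form C → Form C
  | imp : Form C → Form C → Form C

/-- The de Morgan dual operator on formulas. -/
def Form.dual {C : Type} : Form C → Form C
  | .lit l => .lit l.dual
  | .bot => .top
  | .top => .bot
  | .and φ ψ => .or φ.dual ψ.dual
  | .or φ ψ => .and φ.dual ψ.dual
  | .imp φ ψ => .and φ ψ.dual

/-- A valuation: maps literals to {0,1} with `v (neg c) = 1 - v (pos c)`. -/
structure Val (C : Type) where
  v : Lit C → ℕ
  le_one : ∀ l, v l ≤ 1
  dual_neg : ∀ c : C, v (Lit.neg c) = 1 - v (Lit.pos c)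

/-- Truth-functional extension of a valuation to formulas. -/
def Val.eval {C : Type} (v : Val C) : Form C → ℕ
  | .lit l => v.v l
  | .bot => 0
  | .top => 1
  | .and φ ψ => min (v.eval φ) (v.eval ψ)
  | .or φ ψ => max (v.eval φ) (v.eval ψ)
  | .imp φ ψ => max (1 - v.eval φ) (v.eval ψ)

/-- Classical consequence. -/
def Entails {C : Type} (Γ : Set (Form C)) (φ : Form C) : Prop :=
  ∀ v : Val C, (∀ γ ∈ Γ, v.eval γ = 1) → v.eval φ = 1

/-- The natural deduction system NK±: intuitionistic rules plus DM and EXC. -/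
inductive NK {C : Type} : Set (Form C) → Form C → Prop
  | hyp {Γ} {φ : Form C} : φ ∈ Γ → NK Γ φ
  | topI {Γ} : NK Γ .top
  | botE {Γ} {φ : Form C} : NK Γ .bot → NK Γ φ
  | impI {Γ} {φ ψ : Form C} : NK (insert φ Γ) ψ → NK Γ (.imp φ ψ)
  | impE {Γ} {φ ψ : Form C} : NK Γ (.imp φ ψ) → NK Γ φ → NK Γ ψ
  | andI {Γ} {φ ψ : Form C} : NK Γ φ → NK Γ ψ → NK Γ (.and φ ψ)
  | andE1 {Γ} {φ ψ : Form C} : NK Γ (.and φ ψ) → NK Γ φ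
  | andE2 {Γ} {φ ψ : Form C} : NK Γ (.and φ ψ) → NK Γ ψ
  | orI1 {Γ} {φ ψ : Form C} : NK Γ φ → NK Γ (.or φ ψ)
  | orI2 {Γ} {φ ψ : Form C} : NK Γ ψ → NK Γ (.or φ ψ)
  | orE {Γ} {φ ψ χ : Form C} :
      NK Γ (.or φ ψ) → NK (insert φ Γ) χ → NK (insert ψ Γ) χ → NK Γ χ
  | dm {Γ} {φ : Form C} : NK (insert φ Γ) .bot → NK Γ φ.dual
  | exc {Γ} {φ : Form C} : NK Γ φ → NK Γ φ.dual → NK Γ .bot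

/-- An atomic rule `(L₁⇒l₁),…,(Lₙ⇒lₙ) ⇒ l` (the case of an empty premiss list,
together with `APP₁`/`APP₂`, covers both forms of atomic rule). -/
structure AtomicRule (C : Type) where
  prems : List (Set (Lit C) × Lit C)
  concl : Lit C

/-- A base is a set of atomic rules. -/
abbrev Base (C : Type) := Set (AtomicRule C)

/-- Derivability in a base.  Conclusions are `some l` (a literal) or `none` (⊥).
Closed under REF, APP₁/APP₂, ABS and DM. -/
inductive Deriv {C : Type} (B : Base C) : Set (Lit C) → Option (Lit C) → Prop
  | ref {L} {l : Lit C} : l ∈ L → Deriv B L (some l)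
  | app {L} (r : AtomicRule C) : r ∈ B →
      (∀ p ∈ r.prems, Deriv B (p.1 ∪ L) (some p.2)) → Deriv B L (some r.concl)
  | abs {L} {l : Lit C} : Deriv B L (some l) → Deriv B L (some l.dual) →
      Deriv B L none
  | dm {L} {l : Lit C} : Deriv B (insert l L) none → Deriv B L (some l.dual)

/-- Support in a base (empty context). -/
def Supp {C : Type} (B : Base C) : Form C → Prop
  | .lit l => Deriv B ∅ (some l)
  | .bot => ∀ l : Lit C, Deriv B ∅ (some l)
  | .top => True
  | .and φ ψ => Supp B φ ∧ Supp B ψ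
  | .or φ ψ => ∀ X : Base C, B ⊆ X → ∀ l : Lit C,
      (∀ Y : Base C, X ⊆ Y → Supp Y φ → Deriv Y ∅ (some l)) →
      (∀ Y : Base C, X ⊆ Y → Supp Y ψ → Deriv Y ∅ (some l)) →
      Deriv X ∅ (some l)
  | .imp φ ψ => ∀ X : Base C, B ⊆ X → Supp X φ → Supp X ψ

/-- Support with a context: `Γ ⊩_B φ`. -/
def SuppCtx {C : Type} (B : Base C) (Γ : Set (Form C)) (φ : Form C) : Prop :=
  ∀ X : Base C, B ⊆ X → (∀ γ ∈ Γ, Supp X γ) → Supp X φ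

/-- Validity: support in every base. -/
def Valid {C : Type} (Γ : Set (Form C)) (φ : Form C) : Prop :=
  ∀ B : Base C, SuppCtx B Γ φ


lemma NK.weaken {C : Type} {Γ Δ : Set (Form C)} {φ : Form C}
    (h : NK Γ φ) (hs : Γ ⊆ Δ) : NK Δ φ := by
  induction h generalizing Δ with
  | hyp h => exact NK.hyp (hs h)
  | topI => exact NK.topI
  | botE _ ih => exact NK.botE (ih hs)
  | impI _ ih => exact NK.impI (ih (Set.insert_subset_insert hs))
  | impE _ _ ih1 ih2 => exact NK.impE (ih1 hs) (ih2 hs)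
  | andI _ _ ih1 ih2 => exact NK.andI (ih1 hs) (ih2 hs)
  | andE1 _ ih => exact NK.andE1 (ih hs)
  | andE2 _ ih => exact NK.andE2 (ih hs)
  | orI1 _ ih => exact NK.orI1 (ih hs)
  | orI2 _ ih => exact NK.orI2 (ih hs)
  | orE _ _ _ ih ih1 ih2 =>
      exact NK.orE (ih hs) (ih1 (Set.insert_subset_insert hs))
        (ih2 (Set.insert_subset_insert hs))
  | dm _ ih => exact NK.dm (ih (Set.insert_subset_insert hs))
  | exc _ _ ih1 ih2 => exact NK.exc (ih1 hs) (ih2 hs)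

lemma NK.dd {C : Type} (φ : Form C) : ∀ {Γ : Set (Form C)},
    NK Γ φ.dual.dual → NK Γ φ := by
  induction φ with
  | lit l => intro Γ h; cases l <;> exact h
  | bot => intro Γ h; exact h
  | top => intro Γ h; exact NK.topI
  | and φ ψ ihφ ihψ =>
      intro Γ h
      exact NK.andI (ihφ (NK.andE1 h)) (ihψ (NK.andE2 h))
  | or φ ψ ihφ ihψ =>
      intro Γ h
      exact NK.orE h (NK.orI1 (ihφ (NK.hyp (Set.mem_insert _ _))))
        (NK.orI2 (ihψ (NK.hyp (Set.mem_insert _ _))))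
  | imp φ ψ ihφ ihψ =>
      intro Γ h
      -- h : NK Γ (.or φ.dual ψ.dual.dual)
      apply NK.impI
      have h' : NK (insert φ Γ) (Form.or φ.dual ψ.dual.dual) :=
        NK.weaken h (Set.subset_insert _ _)
      refine NK.orE h' ?_ ?_
      · exact NK.botE (NK.exc (NK.hyp (Set.mem_insert_of_mem _ (Set.mem_insert _ _)))
          (NK.hyp (Set.mem_insert _ _)))
      · exact ihψ (NK.hyp (Set.mem_insert _ _))

/-- Peirce's Law is derivable in NK±. -/
theorem NK_peirce {C : Type} (φ ψ : Form C) :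
    NK ∅ (Form.imp (Form.imp (Form.imp φ ψ) φ) φ) := by
  apply NK.impI
  apply NK.dd
  apply NK.dm
  have hd : Form.dual φ ∈ (insert φ.dual (insert (Form.imp (Form.imp φ ψ) φ) ∅) : Set (Form C)) :=
    Set.mem_insert _ _
  have hp : Form.imp (Form.imp φ ψ) φ ∈ (insert φ.dual (insert (Form.imp (Form.imp φ ψ) φ) ∅) : Set (Form C)) :=
    Set.mem_insert_of_mem _ (Set.mem_insert _ _)
  have himp : NK (insert φ.dual (insert (Form.imp (Form.imp φ ψ) φ) ∅)) (Form.imp φ ψ) := by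
    apply NK.impI
    exact NK.botE (NK.exc (NK.hyp (Set.mem_insert _ _))
      (NK.hyp (Set.mem_insert_of_mem _ (Set.mem_insert _ _))))
  exact NK.exc (NK.impE (NK.hyp hp) himp) (NK.hyp hd)
end

section
/- Soundness of NK± with respect to base-extension semantics: if Γ ⊢ φ in NK±, then Γ ⊩ φ, i.e., Γ ⊩_B φ for every base B. -/
section Aux
variable {C : Type}

theorem Lit.dual_dual (l : Lit C) : l.dual.dual = l := by cases l <;> rfl

theorem Deriv.monoB {B B' : Base C} {L : Set (Lit C)} {o} (hBB : B ⊆ B')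
    (h : Deriv B L o) : Deriv B' L o := by
  induction h with
  | ref h => exact .ref h
  | app r hr _ ih => exact .app r (hBB hr) ih
  | abs _ _ ih1 ih2 => exact .abs ih1 ih2
  | dm _ ih => exact .dm ih

theorem Deriv.monoL {B : Base C} {L L' : Set (Lit C)} {o} (hLL : L ⊆ L')
    (h : Deriv B L o) : Deriv B L' o := by
  induction h generalizing L' with
  | ref h => exact .ref (hLL h)
  | app r hr _ ih =>
      exact .app r hr (fun p hp' => ih p hp' (Set.union_subset_union_right _ hLL))
  | abs _ _ ih1 ih2 => exact .abs (ih1 hLL) (ih2 hLL)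
  | dm _ ih => exact .dm (ih (Set.insert_subset_insert hLL))

theorem botOfNone {B : Base C} (h : Deriv B ∅ none) (l : Lit C) :
    Deriv B ∅ (some l) := by
  have h1 : Deriv B (insert l.dual ∅) none := h.monoL (Set.empty_subset _)
  have h2 := Deriv.dm h1
  rwa [Lit.dual_dual] at h2

theorem transfer {B : Base C} {l : Lit C} {L : Set (Lit C)} {o}
    (h : Deriv (insert (⟨[], l⟩ : AtomicRule C) B) L o) : Deriv B (insert l L) o := by
  induction h with
  | ref h => exact .ref (Set.mem_insert_iff.mpr (Or.inr h))
  | app r hr _ ih =>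
      rcases Set.mem_insert_iff.mp hr with h' | h'
      · subst h'; exact .ref (Set.mem_insert _ _)
      · refine .app r h' (fun p hp' => ?_)
        rw [Set.union_insert]
        exact ih p hp'
  | abs _ _ ih1 ih2 => exact .abs ih1 ih2
  | dm _ ih =>
      rw [Set.insert_comm] at ih
      exact .dm ih

theorem Supp.mono {φ : Form C} {B X : Base C} (hBX : B ⊆ X) (h : Supp B φ) :
    Supp X φ := by
  induction φ generalizing B X with
  | lit l => exact Deriv.monoB hBX h
  | bot => exact fun l => (h l).monoB hBX
  | top => trivial
  | and φ ψ ihφ ihψ => exact ⟨ihφ hBX h.1, ihψ hBX h.2⟩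
  | or φ ψ _ _ => exact fun Y hXY => h Y (hBX.trans hXY)
  | imp φ ψ _ _ => exact fun Y hXY => h Y (hBX.trans hXY)

theorem suppBot {φ : Form C} : ∀ {B : Base C}, Supp B Form.bot → Supp B φ := by
  induction φ with
  | lit l => exact fun h => h l
  | bot => exact fun h => h
  | top => exact fun _ => trivial
  | and φ ψ ihφ ihψ => exact fun h => ⟨ihφ h, ihψ h⟩
  | or φ ψ _ _ => exact fun h X hBX l _ _ => (h l).monoB hBX
  | imp φ ψ _ ihψ => exact fun h X hBX _ => ihψ (fun l => (h l).monoB hBX)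

theorem orIntro1 {B : Base C} {φ ψ : Form C} (h : Supp B φ) : Supp B (.or φ ψ) :=
  fun X hBX l h1 _ => h1 X (subset_refl X) (h.mono hBX)

theorem orIntro2 {B : Base C} {φ ψ : Form C} (h : Supp B ψ) : Supp B (.or φ ψ) :=
  fun X hBX l _ h2 => h2 X (subset_refl X) (h.mono hBX)

theorem orElim {χ : Form C} : ∀ {X : Base C} {φ ψ : Form C},
    Supp X (.or φ ψ) →
    (∀ Y : Base C, X ⊆ Y → Supp Y φ → Supp Y χ) →
    (∀ Y : Base C, X ⊆ Y → Supp Y ψ → Supp Y χ) → Supp X χ := by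
  induction χ with
  | lit l =>
      intro X φ ψ hor hf hg
      exact hor X (subset_refl X) l hf hg
  | bot =>
      intro X φ ψ hor hf hg l
      exact hor X (subset_refl X) l (fun Y hXY hφ => hf Y hXY hφ l)
        (fun Y hXY hψ => hg Y hXY hψ l)
  | top => intros; trivial
  | and χ1 χ2 ih1 ih2 =>
      intro X φ ψ hor hf hg
      exact ⟨ih1 hor (fun Y h hf' => (hf Y h hf').1) (fun Y h hg' => (hg Y h hg').1),
             ih2 hor (fun Y h hf' => (hf Y h hf').2) (fun Y h hg' => (hg Y h hg').2)⟩
  | imp χ1 χ2 _ ih2 =>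
      intro X φ ψ hor hf hg Y hXY h1
      exact ih2 (hor.mono hXY)
        (fun Z hYZ hφ => hf Z (hXY.trans hYZ) hφ Z (subset_refl Z) (h1.mono hYZ))
        (fun Z hYZ hψ => hg Z (hXY.trans hYZ) hψ Z (subset_refl Z) (h1.mono hYZ))
  | or χ1 χ2 _ _ =>
      intro X φ ψ hor hf hg X' hXX' l h1 h2
      exact hor X' hXX' l
        (fun Y hX'Y hφ => hf Y (hXX'.trans hX'Y) hφ Y (subset_refl Y) l
          (fun Z hYZ => h1 Z (hX'Y.trans hYZ)) (fun Z hYZ => h2 Z (hX'Y.trans hYZ)))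
        (fun Y hX'Y hψ => hg Y (hXX'.trans hX'Y) hψ Y (subset_refl Y) l
          (fun Z hYZ => h1 Z (hX'Y.trans hYZ)) (fun Z hYZ => h2 Z (hX'Y.trans hYZ)))

theorem excLemma {φ : Form C} : ∀ {X : Base C},
    Supp X φ → Supp X φ.dual → Supp X Form.bot := by
  induction φ with
  | lit l =>
      intro X h1 h2 l'
      exact botOfNone (.abs h1 h2) l'
  | bot => exact fun h _ => h
  | top => exact fun _ h => h
  | and φ ψ ihφ ihψ =>
      intro X h hd l
      exact hd X (subset_refl X) l
        (fun Y hXY hφd => ihφ (h.1.mono hXY) hφd l)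
        (fun Y hXY hψd => ihψ (h.2.mono hXY) hψd l)
  | or φ ψ ihφ ihψ =>
      intro X h hd l
      exact h X (subset_refl X) l
        (fun Y hXY hφ => ihφ hφ (hd.1.mono hXY) l)
        (fun Y hXY hψ => ihψ hψ (hd.2.mono hXY) l)
  | imp φ ψ _ ihψ =>
      intro X h hd
      exact ihψ (h X (subset_refl X) hd.1) hd.2

/-- Semantic refutability. -/
def Ref (X : Base C) (φ : Form C) : Prop :=
  ∀ Y : Base C, X ⊆ Y → Supp Y φ → Supp Y Form.bot

theorem orClass {X : Base C} {φ ψ : Form C}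
    (K : ∀ Y : Base C, X ⊆ Y → Ref Y φ → Ref Y ψ → Supp Y Form.bot) :
    Supp X (.or φ ψ) := by
  intro X' hXX' l h1 h2
  set X'' : Base C := insert ⟨[], l.dual⟩ X' with hX''
  have hsub : X' ⊆ X'' := Set.subset_insert _ _
  have hld : Deriv X'' ∅ (some l.dual) :=
    .app ⟨[], l.dual⟩ (Set.mem_insert _ _) (fun p hp => (List.not_mem_nil hp).elim)
  have hbot : Supp X'' Form.bot := by
    refine K X'' (hXX'.trans hsub) ?_ ?_
    · intro Z hZ hφ l'
      exact botOfNone (.abs (h1 Z (hsub.trans hZ) hφ) (hld.monoB hZ)) l'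
    · intro Z hZ hψ l'
      exact botOfNone (.abs (h2 Z (hsub.trans hZ) hψ) (hld.monoB hZ)) l'
  have hnone : Deriv X'' ∅ none := .abs (hbot l) (hbot l.dual)
  have ht : Deriv X' (insert l.dual ∅) none := transfer hnone
  have hd := Deriv.dm ht
  rwa [Lit.dual_dual] at hd

theorem dmLemma : ∀ (φ : Form C) (X : Base C),
    (Ref X φ → Supp X φ.dual) ∧ (Ref X φ.dual → Supp X φ) := by
  intro φ
  induction φ with
  | lit l =>
      intro X
      constructor
      · intro h
        have hl : Deriv (insert (⟨[], l⟩ : AtomicRule C) X) ∅ (some l) :=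
          .app ⟨[], l⟩ (Set.mem_insert _ _) (fun p hp => (List.not_mem_nil hp).elim)
        have hbot := h _ (Set.subset_insert _ _) hl
        have hnone : Deriv (insert (⟨[], l⟩ : AtomicRule C) X) ∅ none :=
          .abs (hbot l) (hbot l.dual)
        exact Deriv.dm (transfer hnone)
      · intro h
        have hl : Deriv (insert (⟨[], l.dual⟩ : AtomicRule C) X) ∅ (some l.dual) :=
          .app ⟨[], l.dual⟩ (Set.mem_insert _ _) (fun p hp => (List.not_mem_nil hp).elim)
        have hbot := h _ (Set.subset_insert _ _) hl
        have hnone : Deriv (insert (⟨[], l.dual⟩ : AtomicRule C) X) ∅ none :=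
          .abs (hbot l.dual) (hbot l.dual.dual)
        have hd := Deriv.dm (transfer hnone)
        rwa [Lit.dual_dual] at hd
  | bot =>
      intro X
      exact ⟨fun _ => trivial, fun h => h X (subset_refl X) trivial⟩
  | top =>
      intro X
      exact ⟨fun h => h X (subset_refl X) trivial, fun _ => trivial⟩
  | and φ ψ ihφ ihψ =>
      intro X
      constructor
      · intro h
        refine orClass (fun Y hXY Rφd Rψd => ?_)
        exact h Y hXY ⟨(ihφ Y).2 Rφd, (ihψ Y).2 Rψd⟩
      · intro h
        exact ⟨(ihφ X).2 (fun Y hXY hφd => h Y hXY (orIntro1 hφd)),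
               (ihψ X).2 (fun Y hXY hψd => h Y hXY (orIntro2 hψd))⟩
  | or φ ψ ihφ ihψ =>
      intro X
      constructor
      · intro h
        exact ⟨(ihφ X).1 (fun Y hXY hφ => h Y hXY (orIntro1 hφ)),
               (ihψ X).1 (fun Y hXY hψ => h Y hXY (orIntro2 hψ))⟩
      · intro h
        refine orClass (fun Y hXY Rφ Rψ => ?_)
        exact h Y hXY ⟨(ihφ Y).1 Rφ, (ihψ Y).1 Rψ⟩
  | imp φ ψ ihφ ihψ =>
      intro X
      constructor
      · intro h
        refine ⟨(ihφ X).2 (fun Y hXY hφd => ?_), (ihψ X).1 (fun Y hXY hψ => ?_)⟩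
        · exact h Y hXY (fun Z hYZ hφ => suppBot (excLemma hφ (hφd.mono hYZ)))
        · exact h Y hXY (fun Z hYZ _ => hψ.mono hYZ)
      · intro h Y hXY hφ
        exact (ihψ Y).2 (fun Z hYZ hψd => h Z (hXY.trans hYZ) ⟨hφ.mono hYZ, hψd⟩)

theorem NK_sound_main {Γ : Set (Form C)} {φ : Form C} (h : NK Γ φ) :
    ∀ X : Base C, (∀ γ ∈ Γ, Supp X γ) → Supp X φ := by
  induction h with
  | hyp hm => exact fun X hΓ => hΓ _ hm
  | topI => exact fun _ _ => trivial
  | botE _ ih => exact fun X hΓ => suppBot (ih X hΓ)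
  | impI _ ih =>
      exact fun X hΓ Y hXY hφ => ih Y (fun γ hγ => by
        rcases Set.mem_insert_iff.mp hγ with rfl | hγ
        · exact hφ
        · exact (hΓ γ hγ).mono hXY)
  | impE _ _ ih1 ih2 => exact fun X hΓ => ih1 X hΓ X (subset_refl X) (ih2 X hΓ)
  | andI _ _ ih1 ih2 => exact fun X hΓ => ⟨ih1 X hΓ, ih2 X hΓ⟩
  | andE1 _ ih => exact fun X hΓ => (ih X hΓ).1
  | andE2 _ ih => exact fun X hΓ => (ih X hΓ).2
  | orI1 _ ih => exact fun X hΓ => orIntro1 (ih X hΓ)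
  | orI2 _ ih => exact fun X hΓ => orIntro2 (ih X hΓ)
  | orE _ _ _ ih ih1 ih2 =>
      refine fun X hΓ => orElim (ih X hΓ) ?_ ?_
      · intro Y hXY hφ
        exact ih1 Y (fun γ hγ => by
          rcases Set.mem_insert_iff.mp hγ with rfl | hγ
          · exact hφ
          · exact (hΓ γ hγ).mono hXY)
      · intro Y hXY hψ
        exact ih2 Y (fun γ hγ => by
          rcases Set.mem_insert_iff.mp hγ with rfl | hγ
          · exact hψ
          · exact (hΓ γ hγ).mono hXY)
  | dm _ ih =>
      intro X hΓ
      refine (dmLemma _ X).1 (fun Y hXY hφ => ?_)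
      exact ih Y (fun γ hγ => by
        rcases Set.mem_insert_iff.mp hγ with rfl | hγ
        · exact hφ
        · exact (hΓ γ hγ).mono hXY)
  | exc _ _ ih1 ih2 => exact fun X hΓ => excLemma (ih1 X hΓ) (ih2 X hΓ)

end Aux

/-- soundness of NK± w.r.t. base-extension semantics. -/
theorem NK_sound_BeS {C : Type} (Γ : Set (Form C)) (φ : Form C) (h : NK Γ φ) :
    Valid Γ φ :=
  fun _B X _hBX hΓ => NK_sound_main h X hΓ
end
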